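/- Let N ≥ 2 and let A be the (2^{N-1}-1) × (2^{N-1}-1) real matrix indexed by pairs (B, X), where B ranges over nonempty subsets of {2,...,N} and X ranges over subsets of [N] of even cardinality ≥ 2, with entries A_{B,X} = (-1)^{|B ∩ X|}. Then A is invertible, with inverse given by (A^{-1})_{X,B} = (A_{B,X} - 1)/2^{N-1}. -/

import Mathlib

open scoped symmDiff


/-- Row index type: nonempty subsets `B ⊆ [N] \ {1}` (index `1` encoded as `⟨0,_⟩`). -/
def RowIdx (N : ℕ) (hN : 2 ≤ N) : Type :=
  {B : Finset (Fin N) // B ⊆ Finset.univ.erase (⟨0, by omega⟩ : Fin N) ∧ B.Nonempty}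

/-- Column index type: subsets `X ⊆ [N]` of even cardinality `≥ 2`. -/
def ColIdx (N : ℕ) : Type :=
  {X : Finset (Fin N) // Even X.card ∧ 2 ≤ X.card}

instance (N : ℕ) (hN : 2 ≤ N) : Fintype (RowIdx N hN) := by unfold RowIdx; infer_instance
instance (N : ℕ) (hN : 2 ≤ N) : DecidableEq (RowIdx N hN) := by unfold RowIdx; infer_instance
instance (N : ℕ) : Fintype (ColIdx N) := by unfold ColIdx; infer_instance
instance (N : ℕ) : DecidableEq (ColIdx N) := by unfold ColIdx; infer_instance

/-- Write the sign as a product over the set. -/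
lemma sign_eq_prod {N : ℕ} (B S : Finset (Fin N)) :
    ((-1 : ℝ)) ^ ((B ∩ S).card) = ∏ i ∈ B, (if i ∈ S then (-1 : ℝ) else 1) := by
  rw [← Finset.prod_filter, Finset.filter_mem_eq_inter, Finset.prod_const]

lemma sign_mul' {N : ℕ} (B X X' : Finset (Fin N)) :
    ((-1 : ℝ)) ^ ((B ∩ X).card) * ((-1 : ℝ)) ^ ((B ∩ X').card)
      = ((-1 : ℝ)) ^ ((B ∩ (X ∆ X')).card) := by
  rw [sign_eq_prod, sign_eq_prod, sign_eq_prod, ← Finset.prod_mul_distrib]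
  refine Finset.prod_congr rfl fun i _ => ?_
  by_cases h1 : i ∈ X <;> by_cases h2 : i ∈ X' <;>
    simp [Finset.mem_symmDiff, h1, h2]

/-- Key sum lemma. -/
lemma key_sum {N : ℕ} (U S : Finset (Fin N)) :
    ∑ B ∈ U.powerset, ((-1 : ℝ)) ^ ((B ∩ S).card)
      = if (U ∩ S).Nonempty then 0 else 2 ^ U.card := by
  have h := Finset.prod_add (fun i : Fin N => if i ∈ S then (-1 : ℝ) else 1)
    (fun _ => 1) U
  simp only [Finset.prod_const_one, mul_one] at h
  have h2 : ∑ B ∈ U.powerset, ((-1 : ℝ)) ^ ((B ∩ S).card)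
      = ∏ i ∈ U, ((if i ∈ S then (-1 : ℝ) else 1) + 1) := by
    rw [h]; exact Finset.sum_congr rfl fun B _ => sign_eq_prod B S
  rw [h2]
  by_cases hus : (U ∩ S).Nonempty
  · rw [if_pos hus]
    obtain ⟨i, hi⟩ := hus
    rw [Finset.mem_inter] at hi
    exact Finset.prod_eq_zero hi.1 (by simp [hi.2])
  · rw [if_neg hus]
    rw [Finset.not_nonempty_iff_eq_empty] at hus
    have : ∀ i ∈ U, ((if i ∈ S then (-1 : ℝ) else 1) + 1) = 2 := by
      intro i hi
      have : i ∉ S := fun hS => by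
        have : i ∈ U ∩ S := Finset.mem_inter.mpr ⟨hi, hS⟩
        simp [hus] at this
      simp [this]; norm_num
    rw [Finset.prod_congr rfl this, Finset.prod_const]

/-- The sign matrix `A_{B,X} = (-1)^{|B ∩ X|}`, with rows indexed by nonempty subsets
`B ⊆ [N] \ {1}` and columns by even-cardinality subsets `X ⊆ [N]` with `|X| ≥ 2`,
is invertible with inverse `(A⁻¹)_{X,B} = (A_{B,X} - 1)/2^{N-1}`. -/
theorem sign_matrix_inverse (N : ℕ) (hN : 2 ≤ N)
    (A : Matrix (RowIdx N hN) (ColIdx N) ℝ)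
    (hA : ∀ B X, A B X = (-1) ^ (B.1 ∩ X.1).card)
    (Ainv : Matrix (ColIdx N) (RowIdx N hN) ℝ)
    (hAinv : ∀ X B, Ainv X B = (A B X - 1) / 2 ^ (N - 1)) :
    Ainv * A = 1 ∧ A * Ainv = 1 := by
  set z : Fin N := ⟨0, by omega⟩ with hz
  set T : Finset (Fin N) := Finset.univ.erase z with hT
  have hTcard : T.card = N - 1 := by
    rw [hT, Finset.card_erase_of_mem (Finset.mem_univ z), Finset.card_univ,
      Fintype.card_fin]
  -- nonemptiness of T ∩ X for even |X| ≥ 2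
  have hTint : ∀ X : Finset (Fin N), 2 ≤ X.card → (T ∩ X).Nonempty := by
    intro X hX
    have hTX : T ∩ X = X.erase z := by
      ext i; simp [hT, Finset.mem_erase, and_comm]
    rw [hTX, ← Finset.card_pos]
    by_cases hzX : z ∈ X
    · have := Finset.card_erase_of_mem hzX; omega
    · rw [Finset.erase_eq_of_notMem hzX]; omega
  -- the first product
  have hmul : Ainv * A = 1 := by
    ext X X'
    rw [Matrix.mul_apply, Matrix.one_apply]
    have hsum : ∀ f : Finset (Fin N) → ℝ,
        ∑ B : RowIdx N hN, f B.1
          = ∑ B ∈ T.powerset.filter (fun B => B.Nonempty), f B := by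
      intro f
      exact (Finset.sum_subtype
        (p := fun B : Finset (Fin N) => B ⊆ Finset.univ.erase z ∧ B.Nonempty)
        (T.powerset.filter (fun B => B.Nonempty))
        (fun B => by simp [Finset.mem_filter, Finset.mem_powerset, hT, and_comm]) f).symm
    have step : ∀ B : RowIdx N hN, Ainv X B * A B X'
        = ((-1 : ℝ) ^ ((B.1 ∩ (X.1 ∆ X'.1)).card) - (-1 : ℝ) ^ ((B.1 ∩ X'.1).card))
            / 2 ^ (N - 1) := by
      intro B
      rw [hAinv, hA, hA]
      rw [div_mul_eq_mul_div, sub_mul, one_mul, sign_mul']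
    rw [Finset.sum_congr rfl fun B _ => step B]
    have hfil : T.powerset.filter (fun B => B.Nonempty) = T.powerset.erase ∅ := by
      ext B
      simp [Finset.mem_filter, Finset.mem_erase, Finset.nonempty_iff_ne_empty, and_comm]
    rw [hsum (fun B => ((-1 : ℝ) ^ ((B ∩ (X.1 ∆ X'.1)).card)
        - (-1 : ℝ) ^ ((B ∩ X'.1).card)) / 2 ^ (N - 1)), hfil,
      Finset.sum_erase_eq_sub (Finset.empty_mem_powerset T)]
    simp only [Finset.empty_inter, Finset.card_empty, pow_zero, sub_self, zero_div,
      sub_zero]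
    rw [← Finset.sum_div, Finset.sum_sub_distrib, key_sum, key_sum,
      if_pos (hTint X'.1 X'.2.2)]
    by_cases hXX' : X = X'
    · have : X.1 ∆ X'.1 = ∅ := by rw [hXX']; exact symmDiff_self X'.1
      rw [if_pos hXX', this]
      simp only [Finset.inter_empty, Finset.not_nonempty_empty, if_neg, ite_false]
      rw [hTcard, sub_zero]
      field_simp
    · rw [if_neg hXX']
      have hne : (X.1 ∆ X'.1).Nonempty := by
        rw [Finset.nonempty_iff_ne_empty]
        intro h
        exact hXX' (Subtype.ext (symmDiff_eq_bot.mp h))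
      have heven : Even (X.1 ∆ X'.1).card := by
        have e1 : (X.1 \ X'.1).card + (X.1 ∩ X'.1).card = X.1.card :=
          Finset.card_sdiff_add_card_inter _ _
        have e2 : (X'.1 \ X.1).card + (X'.1 ∩ X.1).card = X'.1.card :=
          Finset.card_sdiff_add_card_inter _ _
        rw [Finset.inter_comm] at e2
        have e3 : (X.1 ∆ X'.1).card = (X.1 \ X'.1).card + (X'.1 \ X.1).card := by
          rw [show X.1 ∆ X'.1 = (X.1 \ X'.1) ∪ (X'.1 \ X.1) from symmDiff_def _ _]
          exact Finset.card_union_of_disjoint (disjoint_sdiff_sdiff)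
        obtain ⟨a, ha⟩ := X.2.1
        obtain ⟨b, hb⟩ := X'.2.1
        exact ⟨a + b - (X.1 ∩ X'.1).card, by omega⟩
      have hcard2 : 2 ≤ (X.1 ∆ X'.1).card := by
        obtain ⟨k, hk⟩ := heven
        have := Finset.card_pos.mpr hne
        omega
      rw [if_pos (hTint _ hcard2), sub_zero, zero_div]
  -- the equivalence between row and column index types
  have hz0 : ∀ B : Finset (Fin N), B ⊆ T → z ∉ B := by
    intro B hB hzB
    have := hB hzB
    rw [hT, Finset.mem_erase] at this
    exact this.1 rfl
  let e : RowIdx N hN ≃ ColIdx N :=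
    { toFun := fun B => ⟨if Even B.1.card then B.1 else insert z B.1, by
        have hzB := hz0 B.1 B.2.1
        have hpos := Finset.card_pos.mpr B.2.2
        by_cases hE : Even B.1.card
        · rw [if_pos hE]
          obtain ⟨k, hk⟩ := hE
          exact ⟨⟨k, hk⟩, by omega⟩
        · rw [if_neg hE, Finset.card_insert_of_notMem hzB]
          rw [Nat.not_even_iff_odd] at hE
          obtain ⟨k, hk⟩ := hE
          exact ⟨⟨k + 1, by omega⟩, by omega⟩⟩
      invFun := fun X => ⟨X.1.erase z, by
        constructor
        · exact Finset.erase_subset_erase z (Finset.subset_univ X.1)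
        · rw [← Finset.card_pos]
          have h2 := X.2.2
          by_cases hzX : z ∈ X.1
          · have := Finset.card_erase_of_mem hzX; omega
          · rw [Finset.erase_eq_of_notMem hzX]; omega⟩
      left_inv := by
        intro B
        have hzB := hz0 B.1 B.2.1
        apply Subtype.ext
        dsimp only
        by_cases hE : Even B.1.card
        · simp only [if_pos hE]
          exact Finset.erase_eq_of_notMem hzB
        · simp only [if_neg hE]
          exact Finset.erase_insert hzB
      right_inv := by
        intro X
        apply Subtype.ext
        dsimp only
        obtain ⟨hXe, hX2⟩ := X.2
        by_cases hzX : z ∈ X.1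
        · have hc := Finset.card_erase_of_mem hzX
          have hnE : ¬ Even (X.1.erase z).card := by
            rw [Nat.not_even_iff_odd, hc]
            obtain ⟨k, hk⟩ := hXe
            exact ⟨k - 1, by omega⟩
          simp only [if_neg hnE]
          exact Finset.insert_erase hzX
        · simp only [Finset.erase_eq_of_notMem hzX]
          simp only [if_pos hXe] }
  exact ⟨hmul, (Matrix.mul_eq_one_comm_of_equiv e).mpr hmul⟩
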